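/- Let n ≥ 3 be a prime and let G be the graph of Construction 1. For each l ∈ [n], let G_l be the subgraph of G induced by P^l ∪ Q. Then for any two distinct vertices w, w' ∈ Q, the neighborhoods of w and w' in G_l share at most one vertex: |N_{G_l}(w) ∩ N_{G_l}(w')| ≤ 1. -/

import Mathlib

open SimpleGraph

/-- Entry of the Latin square `L_i`:  `L_i(j,k) ≡ j + i·(k-1) (mod n)`, with
indices and entries taken in `ZMod n` (identifying `[n] = {1,…,n}` with `ZMod n`). -/
def latinL (n : ℕ) (i j k : ZMod n) : ZMod n := j + i * (k - 1)

/-- The vertices of the graph `G` of Construction 1: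
`pv k m l` is `v_{k,m}^l ∈ P`, `qv i j` is `w_{i,j} ∈ Q` (with `i ≠ 0`, i.e. `i ∈ [n-1]`),
`rv i j` is `u_{i,j} ∈ R`, and `sv m` is `s_m ∈ S`. -/
inductive Vert (n : ℕ) : Type
  | pv (k m l : ZMod n) : Vert n
  | qv (i : {x : ZMod n // x ≠ 0}) (j : ZMod n) : Vert n
  | rv (i : {x : ZMod n // x ≠ 0}) (j : ZMod n) : Vert n
  | sv (m : ZMod n) : Vert n

/-- One-directional description of the edges of Construction 1:
`w_{i,j}` is adjacent to `v_{k, L_i(j,k)}^l` for all `k, l`;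
`u_{i,j}` is adjacent to every vertex of `T_{l, L_i(j,l)}` for every `l`;
`s_m` is adjacent to every vertex of `T_{l,m}` for every `l`. -/
def rel {n : ℕ} : Vert n → Vert n → Prop
  | .qv i j, .pv k m _ => m = latinL n i.1 j k
  | .rv i j, .pv _ m l => m = latinL n i.1 j l
  | .sv m', .pv _ m _ => m = m'
  | _, _ => False

/-- The bipartite graph `G` of Construction 1. -/
def GraphG (n : ℕ) : SimpleGraph (Vert n) where
  Adj x y := rel x y ∨ rel y x
  symm := ⟨fun _ _ h => h.symm⟩
  loopless := ⟨by intro x h; cases x <;> simp [rel] at h⟩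

/-- The square `G²` of a graph `G`: two distinct vertices are adjacent iff
their distance in `G` is at most 2 (i.e. they are adjacent or have a common neighbor). -/
def square {V : Type*} (G : SimpleGraph V) : SimpleGraph V where
  Adj x y := x ≠ y ∧ (G.Adj x y ∨ ∃ z, G.Adj x z ∧ G.Adj z y)
  symm := by
    constructor
    rintro x y ⟨hxy, h | ⟨z, h1, h2⟩⟩
    · exact ⟨hxy.symm, Or.inl h.symm⟩
    · exact ⟨hxy.symm, Or.inr ⟨z, h2.symm, h1.symm⟩⟩
  loopless := ⟨fun x h => h.1 rfl⟩

/-- `P_k^l = {v_{k,1}^l, …, v_{k,n}^l}`. -/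
def Pkl (n : ℕ) (k l : ZMod n) : Set (Vert n) := {x | ∃ m, x = Vert.pv k m l}

/-- `P^l = P_1^l ∪ ⋯ ∪ P_n^l`. -/
def PlSet (n : ℕ) (l : ZMod n) : Set (Vert n) := {x | ∃ k m, x = Vert.pv k m l}

/-- `P = P^1 ∪ ⋯ ∪ P^n`. -/
def Pset (n : ℕ) : Set (Vert n) := {x | ∃ k m l, x = Vert.pv k m l}

/-- `T_{l,m} = {v_{1,m}^l, …, v_{n,m}^l}`. -/
def Tlm (n : ℕ) (l m : ZMod n) : Set (Vert n) := {x | ∃ k, x = Vert.pv k m l}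

/-- `Q_i = {w_{i,1}, …, w_{i,n}}`. -/
def QiSet (n : ℕ) (i : {x : ZMod n // x ≠ 0}) : Set (Vert n) := {x | ∃ j, x = Vert.qv i j}

/-- `Q = Q_1 ∪ ⋯ ∪ Q_{n-1}`. -/
def Qset (n : ℕ) : Set (Vert n) := {x | ∃ i j, x = Vert.qv i j}

/-- `R_i = {u_{i,1}, …, u_{i,n}}`. -/
def RiSet (n : ℕ) (i : {x : ZMod n // x ≠ 0}) : Set (Vert n) := {x | ∃ j, x = Vert.rv i j}

/-- `R = R_1 ∪ ⋯ ∪ R_{n-1}`. -/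
def Rset (n : ℕ) : Set (Vert n) := {x | ∃ i j, x = Vert.rv i j}

/-- `S = {s_1, …, s_n}`. -/
def Sset (n : ℕ) : Set (Vert n) := {x | ∃ m, x = Vert.sv m}

/-- `G_l`, the subgraph of `G` induced by `P^l ∪ Q` (kept on the same vertex type:
all edges of `G` with both endpoints in `P^l ∪ Q`). -/
def Gl (n : ℕ) (l : ZMod n) : SimpleGraph (Vert n) where
  Adj x y := (GraphG n).Adj x y ∧ x ∈ PlSet n l ∪ Qset n ∧ y ∈ PlSet n l ∪ Qset n
  symm := ⟨fun _ _ ⟨h, hx, hy⟩ => ⟨h.symm, hy, hx⟩⟩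
  loopless := ⟨fun x h => (GraphG n).irrefl h.1⟩

/-- `G` is `k`-choosable: for every list assignment with all lists of size at least `k`
there is a proper coloring choosing each color from the corresponding list. -/
def Choosable {V : Type*} (G : SimpleGraph V) (k : ℕ) : Prop :=
  ∀ L : V → Finset ℕ, (∀ v, k ≤ (L v).card) →
    ∃ φ : V → ℕ, (∀ v, φ v ∈ L v) ∧ ∀ ⦃v w⦄, G.Adj v w → φ v ≠ φ w

/-- The list chromatic number `χ_ℓ(G)`: the least `k` such that `G` is `k`-choosable. -/
noncomputable def listChromaticNumber {V : Type*} (G : SimpleGraph V) : ℕ :=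
  sInf {k | Choosable G k}


/-- for any two distinct `w, w' ∈ Q`, `|N_{G_l}(w) ∩ N_{G_l}(w')| ≤ 1`. -/
theorem stmt_3 (n : ℕ) (hn : n.Prime) (hn3 : 3 ≤ n) (l : ZMod n)
    (w w' : Vert n) (hw : w ∈ Qset n) (hw' : w' ∈ Qset n) (hne : w ≠ w') :
    ((Gl n l).neighborSet w ∩ (Gl n l).neighborSet w').ncard ≤ 1 := by
  haveI := Fact.mk hn
  obtain ⟨i, j, rfl⟩ := hw
  obtain ⟨i', j', rfl⟩ := hw'
  have hsub : ((Gl n l).neighborSet (Vert.qv i j) ∩ (Gl n l).neighborSet (Vert.qv i' j')).Subsingleton := by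
    rintro a ⟨ha1, ha2⟩ b ⟨hb1, hb2⟩
    -- extract structure of a
    have key : ∀ (x : Vert n) (ii : {x : ZMod n // x ≠ 0}) (jj : ZMod n),
        x ∈ (Gl n l).neighborSet (Vert.qv ii jj) →
        ∃ k, x = Vert.pv k (latinL n ii.1 jj k) l := by
      rintro x ii jj ⟨hadj, -, hmem⟩
      cases x with
      | pv k m l' =>
        rcases hadj with h | h
        · simp only [rel] at h
          rcases hmem with ⟨k', m', hx⟩ | ⟨i2, j2, hx⟩
          · cases hx; exact ⟨k, by rw [h]⟩
          · cases hx
        · simp [rel] at h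
      | qv _ _ => rcases hadj with h | h <;> simp [rel] at h
      | rv _ _ => rcases hadj with h | h <;> simp [rel] at h
      | sv _ => rcases hadj with h | h <;> simp [rel] at h
    obtain ⟨k, rfl⟩ := key a i j ha1
    obtain ⟨k2, hk2⟩ := key b i j hb1
    obtain ⟨ka, hka⟩ := key (Vert.pv k (latinL n i.1 j k) l) i' j' ha2
    obtain ⟨kb, hkb⟩ := key b i' j' hb2
    subst hk2
    injection hka with h1 h2 h3
    injection hkb with h4 h5 h6
    subst h1; subst h4
    -- h2 : latinL n i.1 j k = latinL n i'.1 j' k, h5 similar for k2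
    have e1 : j + i.1 * (k - 1) = j' + i'.1 * (k - 1) := h2
    have e2 : j + i.1 * (k2 - 1) = j' + i'.1 * (k2 - 1) := h5
    have hii : i.1 ≠ i'.1 := by
      intro h
      apply hne
      have : j = j' := by
        have := e1
        rw [h] at this
        exact add_right_cancel this
      rw [this]
      congr 1
      exact Subtype.ext h
    have : (i.1 - i'.1) * (k - k2) = 0 := by ring_nf; linear_combination e1 - e2
    rcases mul_eq_zero.mp this with h | h
    · exact absurd (sub_eq_zero.mp h) hii
    · have : k = k2 := sub_eq_zero.mp h
      subst this; rfl
  exact (Set.ncard_le_one_iff hsub.finite).mpr fun ha hb => hsub ha hb
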